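/- Let π₀ be a spherically symmetric probability density on ℝ^d (π₀(z) depends only on ‖z‖₂), x₀ ∈ ℝ^d, and define L(B) = min over measurable f:ℝ^d→[0,1] with E_{π₀}[f(x₀+·)] = p₀, and over δ ∈ B, of E_{z∼π₀}[f(x₀+δ+z)]. Then L({δ : ‖δ‖_∞ ≤ r}) = L({δ : ‖δ‖₂ ≤ √d·r}). -/

import Mathlib

open MeasureTheory Set

-- Rotation lemma: replace δ by δ' of same ℓ₂ norm, adjusting f.
lemma rot_lemma {d : ℕ} (π₀ : (Fin d → ℝ) → ℝ)
    (g : ℝ → ℝ) (hsym : π₀ = fun z => g (Real.sqrt (∑ i, z i ^ 2)))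
    (x₀ δ δ' : Fin d → ℝ) (hnorm : ∑ i, δ i ^ 2 = ∑ i, δ' i ^ 2)
    (f : (Fin d → ℝ) → ℝ) (hf : Measurable f) (hf01 : ∀ z, f z ∈ Icc (0:ℝ) 1) :
    ∃ f' : (Fin d → ℝ) → ℝ, Measurable f' ∧ (∀ z, f' z ∈ Icc (0:ℝ) 1) ∧
      (∫ z, f' (x₀ + z) * π₀ z) = (∫ z, f (x₀ + z) * π₀ z) ∧
      (∫ z, f' (x₀ + δ' + z) * π₀ z) = (∫ z, f (x₀ + δ + z) * π₀ z) := by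
  classical
  set E := EuclideanSpace ℝ (Fin d)
  set φ : E ≃ᵐ (Fin d → ℝ) := (MeasurableEquiv.toLp 2 (Fin d → ℝ)).symm
  set a : E := φ.symm δ' with ha
  set b : E := φ.symm δ with hb
  have hnorm' : ‖a‖ = ‖b‖ := by
    rw [EuclideanSpace.norm_eq, EuclideanSpace.norm_eq]
    congr 1
    simp only [Real.norm_eq_abs, sq_abs]
    exact hnorm.symm
  set e : E ≃ₗᵢ[ℝ] E := Submodule.reflection (ℝ ∙ (a - b))ᗮ with he
  have heab : e a = b := Submodule.reflection_sub hnorm'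
  set Te : (Fin d → ℝ) ≃ᵐ (Fin d → ℝ) :=
    φ.symm.trans ((e.toHomeomorph.toMeasurableEquiv).trans φ) with hTe
  have h1 := EuclideanSpace.volume_preserving_symm_measurableEquiv_toLp (Fin d)
  have hTmp : MeasurePreserving Te volume volume := by
    have := (h1.comp e.measurePreserving).comp h1.symm
    exact this
  have hcoe : ∀ z : Fin d → ℝ, φ.symm z = WithLp.toLp 2 z := fun z => rfl
  have hnormeq : ∀ z : Fin d → ℝ, Real.sqrt (∑ i, z i ^ 2) = ‖φ.symm z‖ := by
    intro z
    rw [EuclideanSpace.norm_eq]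
    congr 1
    refine Finset.sum_congr rfl fun i _ => ?_
    rw [hcoe]
    simp [Real.norm_eq_abs, sq_abs]
  have hTdef : ∀ z : Fin d → ℝ, Te z = φ (e (φ.symm z)) := fun z => rfl
  have hπT : ∀ z, π₀ (Te z) = π₀ z := by
    intro z
    rw [hsym]
    simp only
    rw [hnormeq, hnormeq, hTdef]
    rw [MeasurableEquiv.symm_apply_apply, e.norm_map]
  have hTδ' : Te δ' = δ := by
    rw [hTdef, ← ha, heab, hb, MeasurableEquiv.apply_symm_apply]
  have hTadd : ∀ x y : Fin d → ℝ, Te (x + y) = Te x + Te y := by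
    intro x y
    rw [hTdef, hTdef, hTdef]
    have h2 : φ.symm (x + y) = φ.symm x + φ.symm y := rfl
    have h3 : ∀ u v : E, φ (u + v) = φ u + φ v := fun u v => rfl
    rw [h2, map_add, h3]
  refine ⟨fun x => f (x₀ + Te (x - x₀)), ?_, fun z => hf01 _, ?_, ?_⟩
  · exact hf.comp (measurable_const.add (Te.measurable.comp (measurable_id.sub measurable_const)))
  · have h4 : ∀ z : Fin d → ℝ, x₀ + z - x₀ = z := fun z => by abel
    simp only [h4]
    calc ∫ z, f (x₀ + Te z) * π₀ z = ∫ z, f (x₀ + Te z) * π₀ (Te z) := by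
          exact integral_congr_ae (Filter.Eventually.of_forall fun z => by simp only []; rw [hπT])
      _ = ∫ w, f (x₀ + w) * π₀ w :=
          hTmp.integral_comp Te.measurableEmbedding (fun w => f (x₀ + w) * π₀ w)
  · have h4 : ∀ z : Fin d → ℝ, x₀ + δ' + z - x₀ = δ' + z := fun z => by abel
    simp only [h4, hTadd, hTδ']
    have h5 : ∀ z : Fin d → ℝ, x₀ + (δ + Te z) = x₀ + δ + Te z := fun z => by abel
    simp only [h5]
    calc ∫ z, f (x₀ + δ + Te z) * π₀ z = ∫ z, f (x₀ + δ + Te z) * π₀ (Te z) := by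
          exact integral_congr_ae (Filter.Eventually.of_forall fun z => by simp only []; rw [hπT])
      _ = ∫ w, f (x₀ + δ + w) * π₀ w :=
          hTmp.integral_comp Te.measurableEmbedding (fun w => f (x₀ + δ + w) * π₀ w)

theorem stmt_17 {d : ℕ} (π₀ : (Fin d → ℝ) → ℝ)
    (hmeas : Measurable π₀) (hpos : ∀ z, 0 ≤ π₀ z)
    (hint : Integrable π₀) (hprob : ∫ z, π₀ z = 1)
    (g : ℝ → ℝ) (hsym : π₀ = fun z => g (Real.sqrt (∑ i, z i ^ 2)))
    (x₀ : Fin d → ℝ) (p₀ : ℝ) (hp₀ : p₀ ∈ Ioo (0:ℝ) 1)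
    (L : Set (Fin d → ℝ) → ℝ)
    (hL : L = fun B => sInf {v : ℝ | ∃ (f : (Fin d → ℝ) → ℝ) (δ : Fin d → ℝ),
      Measurable f ∧ (∀ z, f z ∈ Icc (0:ℝ) 1) ∧
      (∫ z, f (x₀ + z) * π₀ z) = p₀ ∧ δ ∈ B ∧
      v = ∫ z, f (x₀ + δ + z) * π₀ z}) (r : ℝ) (hr : 0 < r) :
    L {δ | ∀ i, |δ i| ≤ r} = L {δ | Real.sqrt (∑ i, δ i ^ 2) ≤ Real.sqrt d * r} := by
  rw [hL]
  simp only
  congr 1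
  apply Set.Subset.antisymm
  · rintro v ⟨f, δ, hf, h01, hp, hδ, hv⟩
    refine ⟨f, δ, hf, h01, hp, ?_, hv⟩
    have h1 : ∑ i, δ i ^ 2 ≤ ∑ _i : Fin d, r ^ 2 := by
      refine Finset.sum_le_sum fun i _ => ?_
      have := hδ i
      nlinarith [abs_nonneg (δ i), neg_abs_le (δ i), le_abs_self (δ i)]
    simp only [Finset.sum_const, Finset.card_univ, Fintype.card_fin, nsmul_eq_mul] at h1
    calc Real.sqrt (∑ i, δ i ^ 2) ≤ Real.sqrt ((d : ℝ) * r ^ 2) := Real.sqrt_le_sqrt h1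
      _ = Real.sqrt d * r := by
          rw [Real.sqrt_mul (Nat.cast_nonneg d), Real.sqrt_sq hr.le]
  · rintro v ⟨f, δ, hf, h01, hp, hδ, hv⟩
    set S := ∑ i, δ i ^ 2 with hS
    have hS0 : 0 ≤ S := Finset.sum_nonneg fun i _ => sq_nonneg _
    set c : ℝ := Real.sqrt S / Real.sqrt d with hc
    have hnorm : ∑ i, δ i ^ 2 = ∑ _i : Fin d, c ^ 2 := by
      rcases Nat.eq_zero_or_pos d with hd | hd
      · subst hd; simp
      · have hd' : (0:ℝ) < d := by exact_mod_cast hd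
        have : c ^ 2 = S / d := by
          rw [hc, div_pow, Real.sq_sqrt hS0, Real.sq_sqrt hd'.le]
        rw [Finset.sum_const, Finset.card_univ, Fintype.card_fin, nsmul_eq_mul, this]
        field_simp
        exact hS.symm
    obtain ⟨f', hf', h01', hp', hv'⟩ :=
      rot_lemma π₀ g hsym x₀ δ (fun _ => c) hnorm f hf h01
    refine ⟨f', fun _ => c, hf', h01', by rw [hp', hp], fun i => ?_, by rw [hv, ← hv']⟩
    have hd' : (0:ℝ) < d := by
      have : 0 < d := Fin.pos_iff_nonempty.mpr ⟨i⟩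
      exact_mod_cast this
    have hsd : 0 < Real.sqrt d := Real.sqrt_pos.mpr hd'
    have hcnn : 0 ≤ c := div_nonneg (Real.sqrt_nonneg _) hsd.le
    rw [abs_of_nonneg hcnn, hc, div_le_iff₀ hsd]
    calc Real.sqrt S ≤ Real.sqrt d * r := hδ
      _ = r * Real.sqrt d := mul_comm _ _
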